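/- Let F_0, F_1 : ℝ_+ → ℝ_+ be differentiable with F_0 + F_1 > 0 and suppose F_0(t)+F_1(t) ≤ 1 + (λ_0+λ_1)t with λ_0, λ_1 > 0. Set α(t) = F_0(t)/(F_0(t)+F_1(t)) and suppose α'(t) ≥ κ/(F_0(t)+F_1(t)) whenever α(t) ≤ c, for constants κ > 0, c ∈ (0,1). Then whenever α(s) ≤ c for all s ∈ [0,t], one has α(t) ≥ α(0) + (κ/(λ_0+λ_1))·log(1+(λ_0+λ_1)t). In particular α exceeds c by time T = ((exp(c(λ_0+λ_1)/κ) − 1)/(λ_0+λ_1)). -/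

import Mathlib

/-- Logarithmic lower bound on the normalized coordinate
`α(t) = F₀(t)/(F₀(t)+F₁(t))`: if `F₀+F₁ ≤ 1+(λ₀+λ₁)t` and
`α' ≥ κ/(F₀+F₁)` whenever `α ≤ c`, then as long as `α ≤ c` on `[0,t]`,
`α(t) ≥ α(0) + (κ/(λ₀+λ₁))·log(1+(λ₀+λ₁)t)`; in particular `α` exceeds `c`
by time `T = (exp(c(λ₀+λ₁)/κ) − 1)/(λ₀+λ₁)`. -/
theorem alpha_log_growth (F0 F1 : ℝ → ℝ) (lam0 lam1 κ c : ℝ)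
    (hl0 : 0 < lam0) (hl1 : 0 < lam1) (hκ : 0 < κ)
    (hc : c ∈ Set.Ioo (0 : ℝ) 1)
    (hF0diff : Differentiable ℝ F0) (hF1diff : Differentiable ℝ F1)
    (hF0 : ∀ t ≥ (0 : ℝ), 0 ≤ F0 t) (hF1 : ∀ t ≥ (0 : ℝ), 0 ≤ F1 t)
    (hpos : ∀ t ≥ (0 : ℝ), 0 < F0 t + F1 t)
    (hbound : ∀ t ≥ (0 : ℝ), F0 t + F1 t ≤ 1 + (lam0 + lam1) * t)
    (α : ℝ → ℝ) (hα : ∀ t, α t = F0 t / (F0 t + F1 t))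
    (hderiv : ∀ t ≥ (0 : ℝ), α t ≤ c → κ / (F0 t + F1 t) ≤ deriv α t) :
    (∀ t ≥ (0 : ℝ), (∀ s ∈ Set.Icc 0 t, α s ≤ c) →
        α 0 + κ / (lam0 + lam1) * Real.log (1 + (lam0 + lam1) * t) ≤ α t) ∧
    (∀ t : ℝ, (Real.exp (c * (lam0 + lam1) / κ) - 1) / (lam0 + lam1) < t →
        ¬ ∀ s ∈ Set.Icc (0 : ℝ) t, α s ≤ c) := by
  set lam := lam0 + lam1 with hlamdef
  have hlam : 0 < lam := by positivity
  have hαeq : α = fun s => F0 s / (F0 s + F1 s) := funext hα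
  have key : ∀ t ≥ (0 : ℝ), (∀ s ∈ Set.Icc 0 t, α s ≤ c) →
      α 0 + κ / lam * Real.log (1 + lam * t) ≤ α t := by
    intro t ht hle
    set ψ : ℝ → ℝ := fun s => α s - κ / lam * Real.log (1 + lam * s) with hψ
    have hden_pos : ∀ x ∈ Set.Icc (0:ℝ) t, (0:ℝ) < 1 + lam * x := by
      intro x hx
      nlinarith [hx.1]
    have hcont : ContinuousOn ψ (Set.Icc 0 t) := by
      apply ContinuousOn.sub
      · rw [hαeq]
        exact ContinuousOn.div hF0diff.continuous.continuousOn
          (hF0diff.continuous.continuousOn.add hF1diff.continuous.continuousOn)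
          (fun x hx => (hpos x hx.1).ne')
      · exact continuousOn_const.mul
          (ContinuousOn.log (by fun_prop) (fun x hx => (hden_pos x hx).ne'))
    have hmono : MonotoneOn ψ (Set.Icc 0 t) := by
      apply monotoneOn_of_deriv_nonneg (convex_Icc 0 t) hcont
      · rw [interior_Icc]
        intro x hx
        have hx0 : (0:ℝ) ≤ x := hx.1.le
        have hαd : DifferentiableAt ℝ α x := by
          rw [hαeq]
          exact (hF0diff x).div ((hF0diff x).add (hF1diff x)) (hpos x hx0).ne'
        have hlog : DifferentiableAt ℝ (fun s => κ / lam * Real.log (1 + lam * s)) x := by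
          apply DifferentiableAt.const_mul
          apply DifferentiableAt.log (by fun_prop)
          exact (hden_pos x ⟨hx0, hx.2.le⟩).ne'
        exact (hαd.sub hlog).differentiableWithinAt
      · rw [interior_Icc]
        intro x hx
        have hx0 : (0:ℝ) ≤ x := hx.1.le
        have hxI : x ∈ Set.Icc (0:ℝ) t := ⟨hx0, hx.2.le⟩
        have hdpos := hden_pos x hxI
        have hαd : DifferentiableAt ℝ α x := by
          rw [hαeq]
          exact (hF0diff x).div ((hF0diff x).add (hF1diff x)) (hpos x hx0).ne'
        have hlin : HasDerivAt (fun s : ℝ => 1 + lam * s) lam x := by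
          simpa using ((hasDerivAt_id x).const_mul lam).const_add 1
        have hlog : HasDerivAt (fun s => κ / lam * Real.log (1 + lam * s))
            (κ / (1 + lam * x)) x := by
          have := ((hlin.log hdpos.ne').const_mul (κ / lam))
          rw [div_mul_div_comm, mul_comm κ lam, mul_div_mul_left _ _ hlam.ne'] at this
          convert this using 1
        have hderivψ : deriv ψ x = deriv α x - κ / (1 + lam * x) := by
          rw [hψ]
          rw [deriv_fun_sub hαd hlog.differentiableAt, hlog.deriv]
        rw [hderivψ]
        have h1 : κ / (F0 x + F1 x) ≤ deriv α x := hderiv x hx0 (hle x hxI)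
        have h2 : κ / (1 + lam * x) ≤ κ / (F0 x + F1 x) :=
          div_le_div_of_nonneg_left hκ.le (hpos x hx0) (hbound x hx0)
        linarith
    have h0 : (0:ℝ) ∈ Set.Icc (0:ℝ) t := ⟨le_refl _, ht⟩
    have ht' : t ∈ Set.Icc (0:ℝ) t := ⟨ht, le_refl _⟩
    have := hmono h0 ht' ht
    simp only [hψ, mul_zero, add_zero, Real.log_one] at this
    linarith
  refine ⟨key, ?_⟩
  intro t hT hall
  have hexp : (1:ℝ) < Real.exp (c * lam / κ) := by
    rw [show (1:ℝ) = Real.exp 0 by simp]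
    exact Real.exp_lt_exp.mpr (by have := hc.1; positivity)
  have ht0 : 0 < t := lt_of_le_of_lt (div_nonneg (by linarith) hlam.le) hT
  have hkey := key t ht0.le hall
  have hα0 : 0 ≤ α 0 := by
    rw [hα 0]
    exact div_nonneg (hF0 0 le_rfl) (hpos 0 le_rfl).le
  have hlog : c * lam / κ < Real.log (1 + lam * t) := by
    rw [div_lt_iff₀ hlam] at hT
    have h1 : Real.exp (c * lam / κ) < 1 + lam * t := by nlinarith
    calc c * lam / κ = Real.log (Real.exp (c * lam / κ)) := (Real.log_exp _).symm
      _ < Real.log (1 + lam * t) := Real.log_lt_log (by positivity) h1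
  have hgt : c < κ / lam * Real.log (1 + lam * t) := by
    calc c = κ / lam * (c * lam / κ) := by field_simp
      _ < κ / lam * Real.log (1 + lam * t) := by
        apply mul_lt_mul_of_pos_left hlog (by positivity)
  have := hall t ⟨ht0.le, le_refl _⟩
  linarith
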